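/- Let d ≥ 3 be a fixed integer. There exists δ₀ > 0 such that for every δ ∈ (0, δ₀) there exists a constant c(δ) > 0 with the following property: for every prime p with gcd(p,d) = 1 and every vector 𝔫 = (𝔫_0,…,𝔫_{p−1}) ∈ ℝ^p with 𝔫_j ≥ 0 and Σ_j 𝔫_j = 1, if max_{0≤j≤p−1} |𝔫_j − 1/p| > δ/p and 𝔫_0 < 1 − δ/p, then, setting ε = δ/3, one has Σ ∏_{r=1}^{d−1} 𝔫_{a_r} ≥ c(δ)/p, where the sum runs over all (a_1,…,a_d) ∈ Z_{d,p} such that min_{1≤r≤d} 𝔫_{a_r} ≤ (1/(1+ε))·max_{1≤r≤d} 𝔫_{a_r}. -/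

import Mathlib

open Finset
open scoped Classical
open scoped Pointwise

variable {p : ℕ} [hp : Fact p.Prime]

lemma card_fiber_ge (B : Finset (ZMod p)) (s : ZMod p) :
    2 * (B.card:ℝ) - p ≤ (((B ×ˢ B).filter (fun xy => xy.1 + xy.2 = s)).card : ℝ) := by
  classical
  have hC : (B.image (fun y => s - y)).card = B.card :=
    Finset.card_image_of_injective _ (fun a b h => by
      simpa using sub_right_injective h)
  set C := B.image (fun y => s - y) with hCdef
  have hcard : ((B ∩ C).card : ℝ) ≥ 2 * B.card - p := by
    have h1 : (B ∩ C).card + (B ∪ C).card = B.card + C.card :=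
      Finset.card_inter_add_card_union B C
    have h2 : (B ∪ C).card ≤ p := by
      have := Finset.card_le_univ (B ∪ C)
      simpa [ZMod.card p] using this
    have h1' : ((B ∩ C).card:ℝ) + ((B ∪ C).card:ℝ) = (B.card:ℝ) + (B.card:ℝ) := by
      exact_mod_cast (by rw [h1, hC] : ((B ∩ C).card + (B ∪ C).card : ℕ) = B.card + B.card)
    have h2' : ((B ∪ C).card : ℝ) ≤ p := by exact_mod_cast h2
    linarith
  have hbij : (B ∩ C).card = ((B ×ˢ B).filter (fun xy => xy.1 + xy.2 = s)).card := by
    apply Finset.card_bij (fun x _ => (x, s - x))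
    · intro x hx
      simp only [Finset.mem_inter] at hx
      obtain ⟨hxB, hxC⟩ := hx
      obtain ⟨y, hyB, hyx⟩ := Finset.mem_image.mp hxC
      have hsy : s - x = y := by rw [← hyx]; ring
      simp only [Finset.mem_filter, Finset.mem_product]
      refine ⟨⟨hxB, by rw [hsy]; exact hyB⟩, by ring⟩
    · intro a _ b _ h
      exact (Prod.mk.injEq _ _ _ _).mp h |>.1
    · intro xy hxy
      simp only [Finset.mem_filter, Finset.mem_product] at hxy
      refine ⟨xy.1, ?_, ?_⟩
      · refine Finset.mem_inter.mpr ⟨hxy.1.1, Finset.mem_image.mpr ⟨xy.2, hxy.1.2, ?_⟩⟩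
        rw [← hxy.2]; ring
      · have : s - xy.1 = xy.2 := by rw [← hxy.2]; ring
        rw [this]
  rw [← hbij]; exact hcard

lemma pair_escape (B W : Finset (ZMod p)) (hB : 2 ≤ B.card)
    (hW1 : (W.card : ℝ) ≤ (101/100) * B.card) (hW2 : (W.card : ℝ) ≤ (p:ℝ) - 1) :
    (B.card : ℝ) / 25 ≤ (((B ×ˢ B).filter (fun xy => xy.1 + xy.2 ∉ W)).card : ℝ) := by
  classical
  set P := (B ×ˢ B).filter (fun xy => xy.1 + xy.2 ∉ W) with hPdef
  have hKp : (B.card : ℝ) ≤ p := by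
    have := Finset.card_le_univ B
    simpa [ZMod.card p] using this
  have hK2 : (2:ℝ) ≤ B.card := by exact_mod_cast hB
  by_cases hcd : 2 * B.card - 1 ≤ p
  · -- Cauchy-Davenport case
    have hBne : B.Nonempty := Finset.card_pos.mp (by omega)
    have hCD : min p (B.card + B.card - 1) ≤ (B + B).card :=
      ZMod.cauchy_davenport hp.out hBne hBne
    have hCD' : 2 * B.card ≤ (B + B).card + 1 := by
      rw [min_eq_right (by omega)] at hCD; omega
    have hsub : (B + B) \ W ⊆ P.image (fun xy => xy.1 + xy.2) := by
      intro s hs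
      obtain ⟨hsBB, hsW⟩ := Finset.mem_sdiff.mp hs
      obtain ⟨x, hx, y, hy, hxy⟩ := Finset.mem_add.mp hsBB
      refine Finset.mem_image.mpr ⟨(x, y), ?_, hxy⟩
      simp only [hPdef, Finset.mem_filter, Finset.mem_product]
      exact ⟨⟨hx, hy⟩, by rw [hxy]; exact hsW⟩
    have h1 : ((B + B) \ W).card ≤ P.card :=
      le_trans (Finset.card_le_card hsub) (Finset.card_image_le)
    have h2 : (B + B).card ≤ ((B + B) \ W).card + W.card := by
      have hss : (B + B) ⊆ ((B + B) \ W) ∪ W := by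
        intro s hs
        by_cases h : s ∈ W
        · exact Finset.mem_union_right _ h
        · exact Finset.mem_union_left _ (Finset.mem_sdiff.mpr ⟨hs, h⟩)
      calc (B + B).card ≤ (((B + B) \ W) ∪ W).card := Finset.card_le_card hss
        _ ≤ _ := Finset.card_union_le _ _
    have h1' : (((B + B) \ W).card : ℝ) ≤ P.card := by exact_mod_cast h1
    have h2' : ((B+B).card : ℝ) ≤ ((B + B) \ W).card + W.card := by exact_mod_cast h2
    have hCD'' : 2 * (B.card:ℝ) ≤ ((B+B).card : ℝ) + 1 := by exact_mod_cast hCD'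
    linarith
  · -- large B case
    push_neg at hcd
    have hp2 : (p:ℝ) + 2 ≤ 2 * B.card := by
      exact_mod_cast (by omega : p + 2 ≤ 2 * B.card)
    have hfib : P.card = ∑ s ∈ univ \ W, ((P.filter (fun xy => xy.1 + xy.2 = s)).card) := by
      apply Finset.card_eq_sum_card_fiberwise
      intro xy hxy
      replace hxy : xy ∈ P := hxy
      simp only [hPdef, Finset.mem_filter] at hxy
      exact Finset.mem_sdiff.mpr ⟨Finset.mem_univ _, hxy.2⟩
    have hfib2 : ∀ s ∈ univ \ W,
        2 * (B.card:ℝ) - p ≤ ((P.filter (fun xy => xy.1 + xy.2 = s)).card : ℝ) := by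
      intro s hs
      have hsW : s ∉ W := (Finset.mem_sdiff.mp hs).2
      have heq : P.filter (fun xy => xy.1 + xy.2 = s)
          = (B ×ˢ B).filter (fun xy => xy.1 + xy.2 = s) := by
        ext xy
        simp only [hPdef, Finset.mem_filter, Finset.mem_product]
        constructor
        · rintro ⟨⟨h1, _⟩, h2⟩; exact ⟨h1, h2⟩
        · rintro ⟨h1, h2⟩; exact ⟨⟨h1, by rw [h2]; exact hsW⟩, h2⟩
      rw [heq]; exact card_fiber_ge B s
    have hcardU : ((univ \ W).card : ℝ) = p - W.card := by
      rw [Finset.card_sdiff_of_subset (Finset.subset_univ W)]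
      have hWp : W.card ≤ p := by
        have := Finset.card_le_univ W; simpa [ZMod.card p] using this
      have huc : (univ : Finset (ZMod p)).card = p := by
        simp [ZMod.card p]
      rw [huc, Nat.cast_sub hWp]
    have hsum : ((univ \ W).card : ℝ) * (2 * B.card - p) ≤ P.card := by
      calc ((univ \ W).card : ℝ) * (2 * B.card - p)
          = ∑ _s ∈ univ \ W, (2 * (B.card:ℝ) - p) := by rw [Finset.sum_const, nsmul_eq_mul]
        _ ≤ ∑ s ∈ univ \ W, ((P.filter (fun xy => xy.1 + xy.2 = s)).card : ℝ) :=
            Finset.sum_le_sum hfib2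
        _ = P.card := by rw [hfib]; push_cast; ring
    rw [hcardU] at hsum
    by_cases hsize : (B.card : ℝ) ≤ (10/11) * p
    · nlinarith [hsum, hp2, hW1, hW2, hK2, hKp]
    · push_neg at hsize
      nlinarith [hsum, hp2, hW1, hW2, hK2, hKp]

lemma multi_escape (B : Finset (ZMod p)) (hB : 2 ≤ B.card) :
    ∀ (j : ℕ) (W : Finset (ZMod p)), (W.card : ℝ) ≤ (101/100) * B.card →
      (W.card : ℝ) ≤ (p:ℝ) - 1 →
      (B.card:ℝ)^(j+1) / 25 ≤ (((Fintype.piFinset (fun _ : Fin (j+2) => B)).filter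
        (fun b => (∑ i, b i) ∉ W)).card : ℝ) := by
  intro j
  induction j with
  | zero =>
    intro W hW1 hW2
    have hbij : ((Fintype.piFinset (fun _ : Fin 2 => B)).filter
        (fun b => (∑ i, b i) ∉ W)).card
        = ((B ×ˢ B).filter (fun xy => xy.1 + xy.2 ∉ W)).card := by
      apply Finset.card_bij' (fun b _ => (b 0, b 1)) (fun xy _ => ![xy.1, xy.2])
      · intro b hb
        simp only [Finset.mem_filter, Fintype.mem_piFinset] at hb
        simp only [Finset.mem_filter, Finset.mem_product]
        refine ⟨⟨hb.1 0, hb.1 1⟩, ?_⟩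
        have : (∑ i, b i) = b 0 + b 1 := by rw [Fin.sum_univ_two]
        rw [← this]; exact hb.2
      · intro xy hxy
        simp only [Finset.mem_filter, Finset.mem_product] at hxy
        simp only [Finset.mem_filter, Fintype.mem_piFinset]
        constructor
        · intro i
          fin_cases i
          · simpa using hxy.1.1
          · simpa using hxy.1.2
        · have : (∑ i, (![xy.1, xy.2] : Fin 2 → ZMod p) i) = xy.1 + xy.2 := by
            rw [Fin.sum_univ_two]; simp
          rw [this]; exact hxy.2
      · intro b _; funext i; fin_cases i <;> simp
      · intro xy _; simp
    rw [hbij]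
    simpa using pair_escape B W hB hW1 hW2
  | succ j IH =>
    intro W hW1 hW2
    set k := B.card with hk
    set Tgt := (Fintype.piFinset (fun _ : Fin (j+3) => B)).filter
        (fun b => (∑ i, b i) ∉ W) with hTgt
    set F : ZMod p → Finset (Fin (j+2) → ZMod p) := fun x =>
      (Fintype.piFinset (fun _ : Fin (j+2) => B)).filter
        (fun b => (∑ i, b i) ∉ W.image (fun w => w - x)) with hF
    set G : ZMod p → Finset (Fin (j+3) → ZMod p) := fun x =>
      (F x).image (fun b => (Fin.cons x b : Fin (j+3) → ZMod p)) with hG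
    have hsub : B.biUnion G ⊆ Tgt := by
      intro b' hb'
      obtain ⟨x, hx, hb'2⟩ := Finset.mem_biUnion.mp hb'
      obtain ⟨b, hb, rfl⟩ := Finset.mem_image.mp (by simpa [hG] using hb'2)
      simp only [hF, Finset.mem_filter, Fintype.mem_piFinset] at hb
      simp only [hTgt, Finset.mem_filter, Fintype.mem_piFinset]
      have hsum : (∑ i, Fin.cons x b i) = x + ∑ i, b i := by
        rw [Fin.sum_univ_succ]; simp
      constructor
      · intro i
        refine Fin.cases ?_ ?_ i
        · simpa using hx
        · intro i'; simpa using hb.1 i'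
      · rw [hsum]
        intro hmem
        exact hb.2 (Finset.mem_image.mpr ⟨x + ∑ i, b i, hmem, by ring⟩)
    have hdisj : ∀ x ∈ B, ∀ y ∈ B, x ≠ y → Disjoint (G x) (G y) := by
      intro x _ y _ hxy
      rw [Finset.disjoint_left]
      intro b hbx hby
      obtain ⟨bx, _, hbx2⟩ := Finset.mem_image.mp (by simpa [hG] using hbx)
      obtain ⟨by', _, hby2⟩ := Finset.mem_image.mp (by simpa [hG] using hby)
      apply hxy
      have h1 : b 0 = x := by rw [← hbx2]; simp
      have h2 : b 0 = y := by rw [← hby2]; simp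
      rw [← h1, ← h2]
    have hcard : (B.biUnion G).card = ∑ x ∈ B, (G x).card := Finset.card_biUnion hdisj
    have hcard2 : ∀ x, (G x).card = (F x).card := by
      intro x
      apply Finset.card_image_of_injective
      intro a b h
      funext i
      simpa using congrFun h i.succ
    have hFx : ∀ x, (k:ℝ)^(j+1) / 25 ≤ ((F x).card : ℝ) := by
      intro x
      have himg : ((W.image (fun w => w - x)).card : ℝ) ≤ (W.card : ℝ) := by
        exact_mod_cast Finset.card_image_le
      exact IH _ (le_trans himg hW1) (le_trans himg hW2)
    have hchain : (k:ℝ) * ((k:ℝ)^(j+1) / 25) ≤ (Tgt.card : ℝ) := by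
      calc (k:ℝ) * ((k:ℝ)^(j+1) / 25) = ∑ _x ∈ B, ((k:ℝ)^(j+1) / 25) := by
            rw [Finset.sum_const, nsmul_eq_mul, hk]
        _ ≤ ∑ x ∈ B, ((F x).card : ℝ) := Finset.sum_le_sum (fun x _ => hFx x)
        _ = ((B.biUnion G).card : ℝ) := by
            rw [hcard]
            push_cast
            exact Finset.sum_congr rfl (fun x _ => by rw [hcard2 x])
        _ ≤ (Tgt.card : ℝ) := by exact_mod_cast Finset.card_le_card hsub
    calc (k:ℝ)^(j+1+1) / 25 = (k:ℝ) * ((k:ℝ)^(j+1) / 25) := by ring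
      _ ≤ _ := hchain


set_option maxHeartbeats 10000000 in
/-- For `d ≥ 3` there is `δ₀ > 0` such that for all `δ ∈ (0, δ₀)` there is `c(δ) > 0` with:
for every prime `p` with `gcd(p,d) = 1` and every probability vector `𝔫` on `{0,…,p-1}`,
if `max_j |𝔫_j - 1/p| > δ/p` and `𝔫_0 < 1 - δ/p`, then, with `ε = δ/3`,
`Σ ∏_{r=1}^{d-1} 𝔫_{a_r} ≥ c(δ)/p`, the sum over `(a_1,…,a_d) ∈ Z_{d,p}` with
`min_r 𝔫_{a_r} ≤ (1/(1+ε)) max_r 𝔫_{a_r}`. -/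
theorem unbalanced_tuple_sum_bound (d : ℕ) (hd : 3 ≤ d) :
    ∃ δ₀ : ℝ, 0 < δ₀ ∧ ∀ δ : ℝ, 0 < δ → δ < δ₀ → ∃ c : ℝ, 0 < c ∧
      ∀ (p : ℕ) [Fact p.Prime], Nat.gcd p d = 1 →
        ∀ 𝔫 : ZMod p → ℝ, (∀ j, 0 ≤ 𝔫 j) → (∑ j, 𝔫 j) = 1 →
        (∃ j, δ / p < |𝔫 j - 1 / p|) → 𝔫 0 < 1 - δ / p →
        c / p ≤
          ∑ a ∈ Finset.univ.filter (fun a : Fin d → ZMod p =>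
              (∑ r, a r = 0) ∧
              (⨅ r : Fin d, 𝔫 (a r)) ≤ (1 / (1 + δ / 3)) * ⨆ r : Fin d, 𝔫 (a r)),
            ∏ r ∈ Finset.univ.filter (fun r : Fin d => (r : ℕ) < d - 1), 𝔫 (a r) := by
  obtain ⟨j, rfl⟩ : ∃ j, d = j + 3 := ⟨d - 3, by omega⟩
  refine ⟨1/10, by norm_num, ?_⟩
  intro δ hδ hδ'
  refine ⟨δ * (4/5)^(j+3) / 10000, by positivity, ?_⟩
  intro p hfp hgcd n hn hsum hdev h0
  have hp2 : 2 ≤ p := hfp.out.two_le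
  haveI : NeZero p := ⟨by omega⟩
  have hpR : (0:ℝ) < p := by exact_mod_cast Nat.pos_of_ne_zero (by omega)
  set ε := δ / 3 with hε
  have hε0 : 0 < ε := by rw [hε]; linarith
  have hε1 : ε ≤ 1/30 := by rw [hε]; linarith
  have h1ε : (0:ℝ) < 1 + ε := by linarith
  -- max and min
  obtain ⟨u, -, hu⟩ := Finset.exists_max_image (univ : Finset (ZMod p)) n ⟨0, mem_univ 0⟩
  obtain ⟨v, -, hv⟩ := Finset.exists_min_image (univ : Finset (ZMod p)) n ⟨0, mem_univ 0⟩
  have hu' : ∀ a, n a ≤ n u := fun a => hu a (mem_univ a)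
  have hv' : ∀ a, n v ≤ n a := fun a => hv a (mem_univ a)
  set M := n u with hM
  have hcardU : (univ : Finset (ZMod p)).card = p := by simp [ZMod.card p]
  have hMp : 1 ≤ (p:ℝ) * M := by
    calc (1:ℝ) = ∑ x, n x := hsum.symm
      _ ≤ ∑ _x : ZMod p, M := Finset.sum_le_sum (fun x _ => hu' x)
      _ = (p:ℝ) * M := by rw [Finset.sum_const, hcardU, nsmul_eq_mul]
  have hM0 : 0 ≤ M := hn u
  have hMpos : 0 < M := by nlinarith
  have hM1 : M ≤ 1 := by
    rw [← hsum]
    exact Finset.single_le_sum (fun x _ => hn x) (mem_univ u)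
  have hvp : (p:ℝ) * n v ≤ 1 := by
    calc (p:ℝ) * n v = ∑ _x : ZMod p, n v := by rw [Finset.sum_const, hcardU, nsmul_eq_mul]
      _ ≤ ∑ x, n x := Finset.sum_le_sum (fun x _ => hv' x)
      _ = 1 := hsum
  -- the unbalancedness of the vector
  have hunb : (1 + δ) * n v ≤ M := by
    obtain ⟨j₀, hj₀⟩ := hdev
    rcases lt_abs.mp hj₀ with h | h
    · have h2 : n v ≤ 1/(p:ℝ) := by rw [le_div_iff₀ hpR]; nlinarith
      have h3 : δ * n v ≤ δ / (p:ℝ) := by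
        have := mul_le_mul_of_nonneg_left h2 hδ.le
        rwa [mul_one_div] at this
      have h4 := hu' j₀
      linarith
    · have h2 : n v ≤ n j₀ := hv' j₀
      have h6 : 1/(p:ℝ) ≤ M := by rw [div_le_iff₀ hpR]; nlinarith
      have h1 : n j₀ < 1/(p:ℝ) - δ/p := by linarith
      have h4 : (1+δ) * n v ≤ (1+δ) * n j₀ := mul_le_mul_of_nonneg_left h2 (by linarith)
      have h5 : (1+δ) * n j₀ < (1+δ) * (1/(p:ℝ) - δ/p) :=
        mul_lt_mul_of_pos_left h1 (by linarith)
      have h7 : (1+δ) * (1/(p:ℝ) - δ/p) ≤ 1/p := by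
        have he : (1+δ) * (1/(p:ℝ) - δ/p) = 1/p - δ^2/p := by ring
        have hnn : (0:ℝ) ≤ δ^2/p := by positivity
        linarith
      linarith
  have hε2 : (1+ε)^2 ≤ 1 + δ := by rw [hε]; nlinarith
  -- B and B₂
  set B := univ.filter (fun x : ZMod p => M / (1+ε) < n x) with hBdef
  set B₂ := univ.filter (fun x : ZMod p => M / (1+ε)^2 < n x) with hB₂def
  have hBB₂ : B ⊆ B₂ := by
    intro x hx
    rw [hBdef, mem_filter] at hx
    rw [hB₂def, mem_filter]
    refine ⟨mem_univ x, lt_of_le_of_lt ?_ hx.2⟩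
    rw [div_le_div_iff₀ (by positivity) (by positivity)]
    nlinarith [mul_nonneg (mul_nonneg hM0 h1ε.le) hε0.le]
  have huB : u ∈ B := by
    rw [hBdef, mem_filter]
    exact ⟨mem_univ u, by rw [div_lt_iff₀ h1ε]; nlinarith⟩
  have hvB₂ : v ∉ B₂ := by
    rw [hB₂def, mem_filter]
    push_neg
    intro _
    rw [le_div_iff₀ (by positivity)]
    have hstep : n v * (1+ε)^2 ≤ n v * (1+δ) := mul_le_mul_of_nonneg_left hε2 (hn v)
    linarith [hunb, hstep]
  -- the snoc map
  set A : (Fin (j+2) → ZMod p) → (Fin (j+3) → ZMod p) :=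
    fun b => Fin.snoc b (-∑ i, b i) with hAdef
  have hAcast : ∀ b (i : Fin (j+2)), A b i.castSucc = b i := by
    intro b i; simp [hAdef]
  have hAlast : ∀ b, A b (Fin.last (j+2)) = -∑ i, b i := by
    intro b; simp [hAdef]
  have hAsum : ∀ b, ∑ r, A b r = 0 := by
    intro b
    rw [Fin.sum_univ_castSucc]
    have h1 : ∀ i : Fin (j+2), A b i.castSucc = b i := hAcast b
    rw [Finset.sum_congr rfl (fun i _ => h1 i), hAlast]
    ring
  have hAinj : Function.Injective A := by
    intro a b h
    funext i
    have := congrFun h i.castSucc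
    rwa [hAcast, hAcast] at this
  have hfilter : univ.filter (fun r : Fin (j+3) => (r:ℕ) < j + 3 - 1)
      = univ.image Fin.castSucc := by
    ext r
    simp only [mem_filter, mem_univ, true_and, mem_image]
    constructor
    · intro hr
      refine ⟨⟨(r:ℕ), by omega⟩, ?_⟩
      apply Fin.ext
      simp
    · rintro ⟨i, rfl⟩
      have := i.2
      simp only [Fin.coe_castSucc]
      omega
  have hAprod : ∀ b, ∏ r ∈ univ.filter (fun r : Fin (j+3) => (r:ℕ) < j + 3 - 1), n (A b r)
      = ∏ i, n (b i) := by
    intro b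
    rw [hfilter, Finset.prod_image (fun x _ y _ h => Fin.castSucc_injective _ h)]
    exact Finset.prod_congr rfl (fun i _ => by rw [hAcast])
  -- membership helper
  have hmem : ∀ (b : Fin (j+2) → ZMod p) (r s : Fin (j+3)),
      (1+ε) * n (A b r) ≤ n (A b s) →
      A b ∈ univ.filter (fun a : Fin (j+3) → ZMod p =>
        (∑ r, a r = 0) ∧
        (⨅ r : Fin (j+3), n (a r)) ≤ (1 / (1 + ε)) * ⨆ r : Fin (j+3), n (a r)) := by
    intro b r s hrs
    rw [mem_filter]
    refine ⟨mem_univ _, hAsum b, ?_⟩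
    have h1 : (⨅ t, n (A b t)) ≤ n (A b r) :=
      ciInf_le (f := fun t => n (A b t)) (Finite.bddBelow_range _) r
    have h2 : n (A b s) ≤ ⨆ t, n (A b t) :=
      le_ciSup (f := fun t => n (A b t)) (Finite.bddAbove_range _) s
    have h3 : n (A b r) ≤ (1/(1+ε)) * n (A b s) := by
      rw [div_mul_eq_mul_div, le_div_iff₀ h1ε, mul_comm (n (A b r))]
      linarith
    have h4 : (1/(1+ε)) * n (A b s) ≤ (1/(1+ε)) * ⨆ t, n (A b t) :=
      mul_le_mul_of_nonneg_left h2 (by positivity)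
    linarith
  -- main reduction
  have hwnn : ∀ a : Fin (j+3) → ZMod p, (0:ℝ) ≤
      ∏ r ∈ univ.filter (fun r : Fin (j+3) => (r:ℕ) < j + 3 - 1), n (a r) :=
    fun a => Finset.prod_nonneg (fun r _ => hn _)
  have main_est : ∀ S : Finset (Fin (j+2) → ZMod p),
      (∀ b ∈ S, A b ∈ univ.filter (fun a : Fin (j+3) → ZMod p =>
        (∑ r, a r = 0) ∧
        (⨅ r : Fin (j+3), n (a r)) ≤ (1 / (1 + ε)) * ⨆ r : Fin (j+3), n (a r))) →
      ∑ b ∈ S, ∏ i, n (b i) ≤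
      ∑ a ∈ univ.filter (fun a : Fin (j+3) → ZMod p =>
              (∑ r, a r = 0) ∧
              (⨅ r : Fin (j+3), n (a r)) ≤ (1 / (1 + ε)) * ⨆ r : Fin (j+3), n (a r)),
        ∏ r ∈ univ.filter (fun r : Fin (j+3) => (r:ℕ) < j + 3 - 1), n (a r) := by
    intro S hS
    have h1 : ∑ b ∈ S, ∏ i, n (b i) = ∑ a ∈ S.image A,
        ∏ r ∈ univ.filter (fun r : Fin (j+3) => (r:ℕ) < j + 3 - 1), n (a r) := by
      rw [Finset.sum_image (fun x _ y _ h => hAinj h)]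
      exact Finset.sum_congr rfl (fun b _ => (hAprod b).symm)
    rw [h1]
    apply Finset.sum_le_sum_of_subset_of_nonneg
    · intro a ha
      obtain ⟨b, hb, rfl⟩ := Finset.mem_image.mp ha
      exact hS b hb
    · intro a _ _
      exact hwnn a
  -- it suffices to exhibit a good family S
  suffices hgoal : ∃ S : Finset (Fin (j+2) → ZMod p),
      (∀ b ∈ S, A b ∈ univ.filter (fun a : Fin (j+3) → ZMod p =>
        (∑ r, a r = 0) ∧
        (⨅ r : Fin (j+3), n (a r)) ≤ (1 / (1 + ε)) * ⨆ r : Fin (j+3), n (a r))) ∧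
      δ * (4/5)^(j+3) / 10000 / p ≤ ∑ b ∈ S, ∏ i, n (b i) by
    obtain ⟨S, hS1, hS2⟩ := hgoal
    exact le_trans hS2 (main_est S hS1)
  set q := ∑ x ∈ B, n x with hqdef
  have hq0 : 0 ≤ q := Finset.sum_nonneg (fun x _ => hn x)
  have hq1 : q ≤ 1 := by
    rw [← hsum]
    exact Finset.sum_le_sum_of_subset_of_nonneg (subset_univ B) (fun x _ _ => hn x)
  by_cases hqcase : q ≤ 1 - 1/200
  · -- Case 1 : a lot of mass outside B
    set t1 : Fin (j+2) → Finset (ZMod p) := fun i => if i = 0 then {u} else univ with ht1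
    set t2 : Fin (j+2) → Finset (ZMod p) := fun i => if i = 0 then {u} else B with ht2
    have hsub21 : Fintype.piFinset t2 ⊆ Fintype.piFinset t1 := by
      apply Fintype.piFinset_subset
      intro i
      by_cases h : i = 0
      · simp [ht1, ht2, h]
      · simp [ht1, ht2, h, subset_univ]
    refine ⟨Fintype.piFinset t1 \ Fintype.piFinset t2, ?_, ?_⟩
    · intro b hb
      obtain ⟨hb1, hb2⟩ := Finset.mem_sdiff.mp hb
      rw [Fintype.mem_piFinset] at hb1
      have hb0 : b 0 = u := by
        have := hb1 0
        simpa [ht1] using this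
      have hex : ∃ i, b i ∉ B := by
        by_contra hcon
        push_neg at hcon
        apply hb2
        rw [Fintype.mem_piFinset]
        intro i
        by_cases h : i = 0
        · subst h; simp [ht2, hb0]
        · simp only [ht2, if_neg h]; exact hcon i
      obtain ⟨i₀, hi₀⟩ := hex
      apply hmem b i₀.castSucc ((0 : Fin (j+2)).castSucc)
      rw [hAcast, hAcast, hb0]
      have hsmall : n (b i₀) ≤ M / (1+ε) := by
        by_contra hcc
        push_neg at hcc
        exact hi₀ (by rw [hBdef, mem_filter]; exact ⟨mem_univ _, hcc⟩)
      show (1+ε) * n (b i₀) ≤ M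
      calc (1+ε) * n (b i₀) ≤ (1+ε) * (M/(1+ε)) := mul_le_mul_of_nonneg_left hsmall h1ε.le
        _ = M := by rw [mul_comm]; exact div_mul_cancel₀ M (ne_of_gt h1ε)
    · have hsum1 : ∑ b ∈ Fintype.piFinset t1, ∏ i, n (b i) = M := by
        rw [← Finset.prod_univ_sum]
        have hco : ∀ i : Fin (j+2), (∑ x ∈ t1 i, n x) = if i = 0 then M else 1 := by
          intro i
          by_cases h : i = 0
          · rw [if_pos h]; simp [ht1, h, hM]
          · rw [if_neg h]; simp only [ht1, if_neg h]; exact hsum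
        rw [Finset.prod_congr rfl (fun i _ => hco i)]
        rw [Finset.prod_ite_eq' univ (0 : Fin (j+2)) (fun _ => M)]
        simp
      have hsum2 : ∑ b ∈ Fintype.piFinset t2, ∏ i, n (b i) = M * q^(j+1) := by
        rw [← Finset.prod_univ_sum]
        have hco : ∀ i : Fin (j+2), (∑ x ∈ t2 i, n x) = if i = 0 then M else q := by
          intro i
          by_cases h : i = 0
          · rw [if_pos h]; simp [ht2, h, hM]
          · rw [if_neg h]; simp only [ht2, if_neg h]; exact hqdef.symm
        rw [Finset.prod_congr rfl (fun i _ => hco i)]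
        rw [← Finset.mul_prod_erase univ _ (mem_univ (0 : Fin (j+2))), if_pos rfl]
        congr 1
        rw [Finset.prod_congr rfl (fun i hi => if_neg (Finset.ne_of_mem_erase hi))]
        rw [Finset.prod_const, Finset.card_erase_of_mem (mem_univ _), Finset.card_univ]
        simp
      rw [Finset.sum_sdiff_eq_sub hsub21, hsum1, hsum2]
      -- now prove c/p ≤ M - M q^{j+1}
      have hqpow : q^(j+1) ≤ q := pow_le_of_le_one hq0 hq1 (by omega)
      have hMq : M * q^(j+1) ≤ M * q := mul_le_mul_of_nonneg_left hqpow hM0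
      have hMq2 : M * q ≤ M * (1 - 1/200) := mul_le_mul_of_nonneg_left hqcase hM0
      have hM200 : (1:ℝ)/(p:ℝ) * (1/200) ≤ M - M * q^(j+1) := by
        have h6 : 1/(p:ℝ) ≤ M := by rw [div_le_iff₀ hpR]; nlinarith
        nlinarith
      have hcle : δ * (4/5)^(j+3) / 10000 ≤ 1/(200:ℝ) := by
        have hpow1 : (4/5:ℝ)^(j+3) ≤ 1 := pow_le_one₀ (by norm_num) (by norm_num)
        have hpow0 : (0:ℝ) ≤ (4/5:ℝ)^(j+3) := by positivity
        nlinarith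
      calc δ * (4/5)^(j+3) / 10000 / p ≤ (1/(200:ℝ)) / p := by gcongr
        _ = 1/(p:ℝ) * (1/200) := by ring
        _ ≤ M - M * q^(j+1) := hM200
  · -- Case 2: almost all mass inside B
    push_neg at hqcase
    have hk1 : 1 ≤ B.card := Finset.card_pos.mpr ⟨u, huB⟩
    have hkR : (1:ℝ) ≤ B.card := by exact_mod_cast hk1
    have hkp : (B.card:ℝ) ≤ p := by
      have h := Finset.card_le_univ B
      rw [ZMod.card p] at h
      exact_mod_cast h
    have hqkM : q ≤ B.card * M := by
      calc q ≤ ∑ _x ∈ B, M := Finset.sum_le_sum (fun x _ => hu' x)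
        _ = B.card * M := by rw [Finset.sum_const, nsmul_eq_mul]
    have hMk : (199:ℝ)/200 < B.card * M := by
      have : (199:ℝ)/200 = 1 - 1/200 := by norm_num
      linarith
    have hcardB2B : ((B₂ \ B).card : ℝ) * (M / (1+ε)^2) ≤ 1/200 := by
      have h1 : ∀ x ∈ B₂ \ B, M/(1+ε)^2 ≤ n x := by
        intro x hx
        have hxx := (Finset.mem_sdiff.mp hx).1
        rw [hB₂def, mem_filter] at hxx
        exact hxx.2.le
      have h2 : ((B₂ \ B).card : ℝ) * (M/(1+ε)^2) ≤ ∑ x ∈ B₂ \ B, n x := by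
        have := Finset.card_nsmul_le_sum (B₂ \ B) n (M/(1+ε)^2) h1
        rwa [nsmul_eq_mul] at this
      have h3 : ∑ x ∈ B₂ \ B, n x ≤ ∑ x ∈ univ \ B, n x := by
        apply Finset.sum_le_sum_of_subset_of_nonneg
        · intro x hx
          rw [Finset.mem_sdiff] at hx ⊢
          exact ⟨mem_univ x, hx.2⟩
        · intro x _ _; exact hn x
      have h4 : ∑ x ∈ univ \ B, n x = 1 - q := by
        rw [Finset.sum_sdiff_eq_sub (subset_univ B), hsum]
      linarith
    have hB2B : ((B₂ \ B).card : ℝ) ≤ (1/100) * B.card := by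
      have h1e2 : (0:ℝ) < (1+ε)^2 := by positivity
      have hXM : ((B₂ \ B).card:ℝ) * M ≤ (1/200) * (1+ε)^2 := by
        have hx : ((B₂ \ B).card:ℝ) * M = (((B₂ \ B).card:ℝ) * (M/(1+ε)^2)) * (1+ε)^2 := by
          field_simp
        rw [hx]
        exact mul_le_mul_of_nonneg_right hcardB2B h1e2.le
      nlinarith [hXM, hMk, hMpos, hε0, hε1, (by positivity : (0:ℝ) ≤ ((B₂ \ B).card:ℝ))]
    have hcardB₂ : (B₂.card : ℝ) ≤ (101/100) * B.card := by
      have h1 : B₂.card ≤ (B₂ \ B).card + B.card := Finset.card_le_card_sdiff_add_card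
      have h1' : (B₂.card:ℝ) ≤ ((B₂ \ B).card:ℝ) + B.card := by exact_mod_cast h1
      linarith
    have hB₂p : (B₂.card:ℝ) ≤ (p:ℝ) - 1 := by
      have hsub : B₂ ⊆ univ.erase v := by
        intro x hx
        exact Finset.mem_erase.mpr ⟨fun h => hvB₂ (h ▸ hx), mem_univ x⟩
      have h1 := Finset.card_le_card hsub
      rw [Finset.card_erase_of_mem (mem_univ v), hcardU] at h1
      have h2 : ((p-1:ℕ):ℝ) = (p:ℝ) - 1 := by
        rw [Nat.cast_sub (by omega)]; simp
      rw [← h2]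
      exact_mod_cast h1
    by_cases hksing : B.card = 1
    · -- k = 1
      obtain ⟨x₁, hx₁⟩ := Finset.card_eq_one.mp hksing
      have hBu : B = {u} := by
        have hu1 : u ∈ ({x₁} : Finset (ZMod p)) := hx₁ ▸ huB
        rw [Finset.mem_singleton] at hu1
        rw [hx₁, hu1]
      have hqM : q = M := by rw [hqdef, hBu, Finset.sum_singleton]
      have hM199 : 1 - 1/200 < M := by rw [← hqM]; exact hqcase
      have hB₂B : B₂ = B := by
        apply Finset.Subset.antisymm _ hBB₂
        have hzero : B₂ \ B = ∅ := by
          by_contra hzz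
          obtain ⟨y, hy⟩ := Finset.nonempty_of_ne_empty hzz
          have h1 : 1 ≤ (B₂ \ B).card := Finset.card_pos.mpr ⟨y, hy⟩
          have h1R : (1:ℝ) ≤ ((B₂ \ B).card:ℝ) := by exact_mod_cast h1
          rw [hksing] at hB2B
          norm_num at hB2B
          linarith
        intro y hy
        by_cases hyB : y ∈ B
        · exact hyB
        · exact absurd (Finset.mem_sdiff.mpr ⟨hy, hyB⟩) (by rw [hzero]; exact Finset.notMem_empty y)
      by_cases hu0 : u = 0
      · -- u = 0 : family (t, 0, ..., 0)
        refine ⟨Fintype.piFinset (fun i : Fin (j+2) => if i = 0 then univ \ B else {u}), ?_, ?_⟩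
        · intro b hb
          rw [Fintype.mem_piFinset] at hb
          have hb0 : b 0 ∈ univ \ B := by have := hb 0; simpa using this
          have hb1 : b 1 = u := by
            have := hb 1
            have h10 : (1 : Fin (j+2)) ≠ 0 := by
              intro hcon
              have := congrArg Fin.val hcon
              simp [Fin.val_one] at this
            rw [if_neg h10, Finset.mem_singleton] at this
            exact this
          apply hmem b ((0 : Fin (j+2)).castSucc) ((1 : Fin (j+2)).castSucc)
          rw [hAcast, hAcast, hb1]
          have hb0' : n (b 0) ≤ M/(1+ε) := by
            have hnb := (Finset.mem_sdiff.mp hb0).2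
            by_contra hcc
            push_neg at hcc
            exact hnb (by rw [hBdef, mem_filter]; exact ⟨mem_univ _, hcc⟩)
          show (1+ε) * n (b 0) ≤ M
          calc (1+ε) * n (b 0) ≤ (1+ε) * (M/(1+ε)) := mul_le_mul_of_nonneg_left hb0' h1ε.le
            _ = M := by rw [mul_comm]; exact div_mul_cancel₀ M (ne_of_gt h1ε)
        · have hsval : ∑ b ∈ Fintype.piFinset (fun i : Fin (j+2) => if i = 0 then univ \ B else {u}),
              ∏ i, n (b i) = (1-q) * M^(j+1) := by
            rw [← Finset.prod_univ_sum]
            have hco : ∀ i : Fin (j+2),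
                (∑ x ∈ (if i = 0 then univ \ B else {u}), n x) = if i = 0 then 1-q else M := by
              intro i
              by_cases h : i = 0
              · rw [if_pos h, if_pos h, Finset.sum_sdiff_eq_sub (subset_univ B), hsum]
              · rw [if_neg h, if_neg h, Finset.sum_singleton]
            rw [Finset.prod_congr rfl (fun i _ => hco i)]
            rw [← Finset.mul_prod_erase univ _ (mem_univ (0 : Fin (j+2))), if_pos rfl]
            congr 1
            rw [Finset.prod_congr rfl (fun i hi => if_neg (Finset.ne_of_mem_erase hi))]
            rw [Finset.prod_const, Finset.card_erase_of_mem (mem_univ _), Finset.card_univ]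
            simp
          rw [hsval]
          have h1q : δ/p < 1 - q := by
            have hq00 : q = n 0 := by rw [hqM, hM, hu0]
            linarith
          have h1q0 : (0:ℝ) ≤ δ/p := by positivity
          have hMpow : (199/200:ℝ)^(j+1) ≤ M^(j+1) :=
            pow_le_pow_left₀ (by norm_num) (by linarith) _
          have hpows : (4/5:ℝ)^(j+3) / 10000 ≤ (199/200:ℝ)^(j+1) := by
            have ha1 : (4/5:ℝ)^(j+3) ≤ (4/5:ℝ)^(j+1) :=
              pow_le_pow_of_le_one (by norm_num) (by norm_num) (by omega)
            have ha2 : (4/5:ℝ)^(j+1) ≤ (199/200:ℝ)^(j+1) :=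
              pow_le_pow_left₀ (by norm_num) (by norm_num) _
            have ha0 : (0:ℝ) ≤ (4/5:ℝ)^(j+3) := by positivity
            linarith
          have hpow0' : (0:ℝ) ≤ (199/200:ℝ)^(j+1) := by positivity
          calc δ * (4/5)^(j+3)/10000/p = (δ/p) * ((4/5)^(j+3)/10000) := by ring
            _ ≤ (1-q) * (199/200:ℝ)^(j+1) :=
                mul_le_mul h1q.le hpows (by positivity) (by linarith)
            _ ≤ (1-q) * M^(j+1) :=
                mul_le_mul_of_nonneg_left hMpow (by linarith)
      · -- u ≠ 0 : single tuple (u,...,u)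
        refine ⟨{fun _ => u}, ?_, ?_⟩
        · intro b hb
          rw [Finset.mem_singleton] at hb
          subst hb
          have hs : -(∑ _i : Fin (j+2), u) ∉ B₂ := by
            rw [hB₂B, hBu, Finset.mem_singleton]
            intro hcon
            have hsum_u : (∑ _i : Fin (j+2), u) = ((j+2 : ℕ) : ZMod p) * u := by
              rw [Finset.sum_const, Finset.card_univ]
              simp [nsmul_eq_mul]
            have hzz : ((j+3:ℕ) : ZMod p) * u = 0 := by
              have hcon' : (∑ _i : Fin (j+2), u) = -u := neg_eq_iff_eq_neg.mp hcon
              have hkey : ((j+2 : ℕ) : ZMod p) * u = -u := hsum_u.symm.trans hcon'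
              push_cast at hkey ⊢
              linear_combination hkey
            have hd0 : ((j+3:ℕ) : ZMod p) ≠ 0 := by
              rw [Ne, ZMod.natCast_eq_zero_iff]
              intro hdvd
              have hg := Nat.gcd_eq_left hdvd
              rw [hgcd] at hg
              omega
            rcases mul_eq_zero.mp hzz with h | h
            · exact hd0 h
            · exact hu0 h
          apply hmem _ (Fin.last (j+2)) ((0:Fin (j+2)).castSucc)
          rw [hAlast, hAcast]
          have hns : n (-(∑ _i : Fin (j+2), u)) ≤ M/(1+ε)^2 := by
            by_contra hcc
            push_neg at hcc
            exact hs (by rw [hB₂def, mem_filter]; exact ⟨mem_univ _, hcc⟩)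
          show (1+ε) * n (-(∑ _i : Fin (j+2), u)) ≤ n u
          have hstep : (1+ε) * (M/(1+ε)^2) = M/(1+ε) := by
            field_simp
          calc (1+ε) * n (-(∑ _i : Fin (j+2), u)) ≤ (1+ε) * (M/(1+ε)^2) :=
                mul_le_mul_of_nonneg_left hns h1ε.le
            _ = M/(1+ε) := hstep
            _ ≤ M := div_le_self hM0 (by linarith)
            _ = n u := hM
        · rw [Finset.sum_singleton]
          have hprod : (∏ _i : Fin (j+2), n u) = M^(j+2) := by
            rw [Finset.prod_const, Finset.card_univ]
            simp [hM]
          rw [hprod]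
          have hMpow : (199/200:ℝ)^(j+2) ≤ M^(j+2) :=
            pow_le_pow_left₀ (by norm_num) (by linarith) _
          have hpows : (4/5:ℝ)^(j+3) / 10000 ≤ (199/200:ℝ)^(j+2) := by
            have ha1 : (4/5:ℝ)^(j+3) ≤ (4/5:ℝ)^(j+2) :=
              pow_le_pow_of_le_one (by norm_num) (by norm_num) (by omega)
            have ha2 : (4/5:ℝ)^(j+2) ≤ (199/200:ℝ)^(j+2) :=
              pow_le_pow_left₀ (by norm_num) (by norm_num) _
            have ha0 : (0:ℝ) ≤ (4/5:ℝ)^(j+3) := by positivity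
            linarith
          have hδp : δ/p ≤ 1 := by
            rw [div_le_one hpR]
            have h2p : (2:ℝ) ≤ p := by exact_mod_cast hp2
            linarith
          calc δ * (4/5)^(j+3)/10000/p = (δ/p) * ((4/5)^(j+3)/10000) := by ring
            _ ≤ 1 * (199/200:ℝ)^(j+2) := by
                apply mul_le_mul hδp hpows (by positivity) (by norm_num)
            _ = (199/200:ℝ)^(j+2) := one_mul _
            _ ≤ M^(j+2) := hMpow
    · -- k ≥ 2
      have hk2 : 2 ≤ B.card := by omega
      set W := B₂.image (fun x => -x) with hWdef
      have hWcard : W.card = B₂.card := Finset.card_image_of_injective _ neg_injective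
      have hW1 : (W.card:ℝ) ≤ (101/100) * B.card := by rw [hWcard]; exact hcardB₂
      have hW2 : (W.card:ℝ) ≤ (p:ℝ) - 1 := by rw [hWcard]; exact hB₂p
      have hEsc := multi_escape B hk2 j W hW1 hW2
      refine ⟨(Fintype.piFinset (fun _ : Fin (j+2) => B)).filter (fun b => (∑ i, b i) ∉ W), ?_, ?_⟩
      · intro b hb
        rw [Finset.mem_filter, Fintype.mem_piFinset] at hb
        obtain ⟨hb1, hb2⟩ := hb
        have hsB₂ : -(∑ i, b i) ∉ B₂ := by
          intro hcon
          apply hb2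
          rw [hWdef]
          exact Finset.mem_image.mpr ⟨-(∑ i, b i), hcon, by rw [neg_neg]⟩
        apply hmem b (Fin.last (j+2)) ((0:Fin (j+2)).castSucc)
        rw [hAlast, hAcast]
        have hns : n (-(∑ i, b i)) ≤ M/(1+ε)^2 := by
          by_contra hcc
          push_neg at hcc
          exact hsB₂ (by rw [hB₂def, mem_filter]; exact ⟨mem_univ _, hcc⟩)
        have hb0B : M/(1+ε) < n (b 0) := by
          have := hb1 0
          rw [hBdef, mem_filter] at this
          exact this.2
        have hstep : (1+ε) * (M/(1+ε)^2) = M/(1+ε) := by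
          field_simp
        calc (1+ε) * n (-(∑ i, b i)) ≤ (1+ε) * (M/(1+ε)^2) :=
              mul_le_mul_of_nonneg_left hns h1ε.le
          _ = M/(1+ε) := hstep
          _ ≤ n (b 0) := hb0B.le
      · have hterm : ∀ b ∈ (Fintype.piFinset (fun _ : Fin (j+2) => B)).filter
            (fun b => (∑ i, b i) ∉ W), (M/(1+ε))^(j+2) ≤ ∏ i, n (b i) := by
          intro b hb
          rw [Finset.mem_filter, Fintype.mem_piFinset] at hb
          have hbi : ∀ i, M/(1+ε) ≤ n (b i) := by
            intro i
            have := hb.1 i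
            rw [hBdef, mem_filter] at this
            exact this.2.le
          calc (M/(1+ε))^(j+2) = ∏ _i : Fin (j+2), (M/(1+ε)) := by
                rw [Finset.prod_const, Finset.card_univ]; simp
            _ ≤ ∏ i, n (b i) :=
                Finset.prod_le_prod (fun _ _ => by positivity) (fun i _ => hbi i)
        set Esc := (Fintype.piFinset (fun _ : Fin (j+2) => B)).filter
            (fun b => (∑ i, b i) ∉ W) with hEscdef
        have hsumEsc : (Esc.card : ℝ) * (M/(1+ε))^(j+2) ≤ ∑ b ∈ Esc, ∏ i, n (b i) := by
          have := Finset.card_nsmul_le_sum Esc (fun b => ∏ i, n (b i)) ((M/(1+ε))^(j+2)) hterm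
          rwa [nsmul_eq_mul] at this
        have hkpos : (0:ℝ) < B.card := by linarith
        have hkne : (B.card:ℝ) ≠ 0 := ne_of_gt hkpos
        have hMl : (4/5:ℝ)/B.card ≤ M/(1+ε) := by
          rw [div_le_div_iff₀ hkpos h1ε]
          nlinarith [hMk, hε0, hε1]
        have hchain1 : δ * (4/5)^(j+3)/10000/p ≤ (4/5:ℝ)^(j+2)/(25*p) := by
          have hps : (4/5:ℝ)^(j+3) = (4/5) * (4/5)^(j+2) := by rw [← pow_succ']
          have hpw : (0:ℝ) ≤ (4/5:ℝ)^(j+2) := by positivity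
          have hnum : δ * (4/5)^(j+3)/10000 ≤ (4/5:ℝ)^(j+2)/25 := by
            rw [hps]
            nlinarith [mul_nonneg (by linarith : (0:ℝ) ≤ 1/10 - δ) hpw, hpw]
          calc δ * (4/5)^(j+3)/10000/p ≤ ((4/5:ℝ)^(j+2)/25)/p := by gcongr
            _ = (4/5:ℝ)^(j+2)/(25*p) := by rw [div_div]
        have hchain2 : (4/5:ℝ)^(j+2)/(25*p) ≤ (4/5:ℝ)^(j+2)/(25*B.card) := by
          gcongr
        have hchain3 : (4/5:ℝ)^(j+2)/(25*B.card) =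
            ((B.card:ℝ)^(j+1)/25) * ((4/5:ℝ)/B.card)^(j+2) := by
          have hkp' : (B.card:ℝ)^(j+1) ≠ 0 := pow_ne_zero _ hkne
          have hk2' : (B.card:ℝ)^(j+2) = (B.card:ℝ)^(j+1) * B.card := pow_succ _ _
          rw [div_pow (4/5:ℝ) (B.card:ℝ), div_mul_div_comm, hk2',
            show (25:ℝ) * ((B.card:ℝ)^(j+1) * B.card) = (B.card:ℝ)^(j+1) * (25 * B.card) by ring,
            mul_div_mul_left _ _ hkp']
        have hchain4 : ((B.card:ℝ)^(j+1)/25) * ((4/5:ℝ)/B.card)^(j+2) ≤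
            ((B.card:ℝ)^(j+1)/25) * (M/(1+ε))^(j+2) := by
          apply mul_le_mul_of_nonneg_left _ (by positivity)
          exact pow_le_pow_left₀ (by positivity) hMl _
        have hchain5 : ((B.card:ℝ)^(j+1)/25) * (M/(1+ε))^(j+2) ≤
            (Esc.card : ℝ) * (M/(1+ε))^(j+2) := by
          apply mul_le_mul_of_nonneg_right hEsc (by positivity)
        calc δ * (4/5)^(j+3)/10000/p ≤ (4/5:ℝ)^(j+2)/(25*p) := hchain1
          _ ≤ (4/5:ℝ)^(j+2)/(25*B.card) := hchain2
          _ = ((B.card:ℝ)^(j+1)/25) * ((4/5:ℝ)/B.card)^(j+2) := hchain3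
          _ ≤ ((B.card:ℝ)^(j+1)/25) * (M/(1+ε))^(j+2) := hchain4
          _ ≤ (Esc.card : ℝ) * (M/(1+ε))^(j+2) := hchain5
          _ ≤ ∑ b ∈ Esc, ∏ i, n (b i) := hsumEsc
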